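/- Let (V,ρ) be an anchored A-module with V finitely generated and projective over A, and let M be any A-module. Then the A-linear dual of the Atiyah sequence of M is isomorphic, as a short exact sequence of A-modules, to the sequence 0 → V^* ⊗_A M^* → Σ_V^* ⊗_A M^* → M^* → 0, where Σ_V^* ⊗_A M^* is balanced against the (natural) right A-action on Σ_V^* and carries the A-module structure coming from the twisted left A-action on Σ_V^*, the first map is θ⊗δ ↦ (θ,0)⊗δ, and the second map is induced by (θ,a) ↦ a (namely (θ,a)⊗δ ↦ a•δ). -/

import Mathlib

open TensorProduct

universe u

/-- For an anchored `A`-module `(V, ρ)` and `a ∈ A`, the `A`-linear form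
`ρ^*(da) : V → A`, `v ↦ ρ(v)(a)`. -/
def rhoStar {k A V : Type*} [CommRing k] [CommRing A] [Algebra k A]
    [AddCommGroup V] [Module A V] (ρ : V →ₗ[A] Derivation k A A) (a : A) :
    V →ₗ[A] A where
  toFun v := ρ v a
  map_add' v w := by simp
  map_smul' c v := by simp

set_option maxHeartbeats 2000000 in
/-- Let `(V,ρ)` be an anchored `A`-module with `V` finitely generated projective, and `M`
any `A`-module.  Let `T` (with `tt`, `unitT`, `piT`) be a realization of `Σ_V ⊗_A M` with
its Atiyah sequence, and let `T3` (with `tt3`) be a realization of `Σ_V^* ⊗_A M^*`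
(balanced against the natural right `A`-action on `Σ_V^* = V^* × A`, with the `A`-module
structure coming from the twisted left `A`-action), with the maps `m1 : θ⊗δ ↦ (θ,0)⊗δ`
and `m2 : (θ,a)⊗δ ↦ a•δ`.  Then the `A`-linear dual of the Atiyah sequence of `M` is
isomorphic, as a short exact sequence of `A`-modules, to the sequence
`0 → V^* ⊗_A M^* → Σ_V^* ⊗_A M^* → M^* → 0`. -/
theorem stmt_10 (k A V M T T3 : Type u) [Field k] [CharZero k] [CommRing A] [Algebra k A]
    [AddCommGroup V] [Module A V] [Module.Finite A V] [Module.Projective A V]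
    [AddCommGroup M] [Module A M]
    [AddCommGroup T] [Module A T] [AddCommGroup T3] [Module A T3]
    (ρ : V →ₗ[A] Derivation k A A)
    -- `T` realizes `Σ_V ⊗_A M` with the `A`-structure from the left action on `Σ_V`
    (tt : (A × V) → M → T)
    (tt_addl : ∀ (s s' : A × V) (m : M), tt (s + s') m = tt s m + tt s' m)
    (tt_addr : ∀ (s : A × V) (m m' : M), tt s (m + m') = tt s m + tt s m')
    (tt_bal : ∀ (b a : A) (v : V) (m : M),
      tt (b * a + ρ v a, a • v) m = tt (b, v) (a • m))
    (tt_mod : ∀ (a b : A) (v : V) (m : M), a • tt (b, v) m = tt (a * b, a • v) m)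
    (tt_univ : ∀ (N : Type u) [AddCommGroup N] (f : (A × V) → M → N),
      (∀ (s s' : A × V) (m : M), f (s + s') m = f s m + f s' m) →
      (∀ (s : A × V) (m m' : M), f s (m + m') = f s m + f s m') →
      (∀ (b a : A) (v : V) (m : M), f (b * a + ρ v a, a • v) m = f (b, v) (a • m)) →
      ∃! F : T →+ N, ∀ s m, F (tt s m) = f s m)
    -- the two maps of the Atiyah sequence of `M`
    (unitT : M →ₗ[A] T) (hunit : ∀ m : M, unitT m = tt (1, 0) m)
    (piT : T →ₗ[A] V ⊗[A] M)
    (hpi : ∀ (a : A) (v : V) (m : M), piT (tt (a, v) m) = v ⊗ₜ[A] m)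
    -- `T3` realizes `Σ_V^* ⊗_A M^*`, balanced against the natural right `A`-action on
    -- `Σ_V^*`, with the `A`-module structure from the twisted left `A`-action
    (tt3 : ((V →ₗ[A] A) × A) → Module.Dual A M → T3)
    (tt3_addl : ∀ (x x' : (V →ₗ[A] A) × A) (δ : Module.Dual A M),
      tt3 (x + x') δ = tt3 x δ + tt3 x' δ)
    (tt3_addr : ∀ (x : (V →ₗ[A] A) × A) (δ δ' : Module.Dual A M),
      tt3 x (δ + δ') = tt3 x δ + tt3 x δ')
    (tt3_bal : ∀ (a : A) (θ : V →ₗ[A] A) (b : A) (δ : Module.Dual A M),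
      tt3 (a • θ, b * a) δ = tt3 (θ, b) (a • δ))
    (tt3_mod : ∀ (a : A) (θ : V →ₗ[A] A) (b : A) (δ : Module.Dual A M),
      a • tt3 (θ, b) δ = tt3 (a • θ + b • rhoStar ρ a, a * b) δ)
    (tt3_univ : ∀ (N : Type u) [AddCommGroup N]
      (f : ((V →ₗ[A] A) × A) → Module.Dual A M → N),
      (∀ x x' δ, f (x + x') δ = f x δ + f x' δ) →
      (∀ x δ δ', f x (δ + δ') = f x δ + f x δ') →
      (∀ (a : A) (θ : V →ₗ[A] A) (b : A) (δ : Module.Dual A M),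
        f (a • θ, b * a) δ = f (θ, b) (a • δ)) →
      ∃! F : T3 →+ N, ∀ x δ, F (tt3 x δ) = f x δ)
    -- the two maps of the sequence `0 → V^* ⊗ M^* → Σ_V^* ⊗ M^* → M^* → 0`
    (m1 : (V →ₗ[A] A) ⊗[A] (Module.Dual A M) →ₗ[A] T3)
    (hm1 : ∀ (θ : V →ₗ[A] A) (δ : Module.Dual A M), m1 (θ ⊗ₜ[A] δ) = tt3 (θ, 0) δ)
    (m2 : T3 →ₗ[A] Module.Dual A M)
    (hm2 : ∀ (θ : V →ₗ[A] A) (b : A) (δ : Module.Dual A M),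
      m2 (tt3 (θ, b) δ) = b • δ) :
    -- the dual of the Atiyah sequence is exact
    (Function.Injective piT.dualMap ∧
      (∀ g : Module.Dual A T, unitT.dualMap g = 0 ↔ g ∈ LinearMap.range piT.dualMap) ∧
      Function.Surjective unitT.dualMap) ∧
    -- the sequence `0 → V^* ⊗_A M^* → Σ_V^* ⊗_A M^* → M^* → 0` is exact
    (Function.Injective m1 ∧
      (∀ y : T3, m2 y = 0 ↔ y ∈ LinearMap.range m1) ∧
      Function.Surjective m2) ∧
    -- the two short exact sequences are isomorphic
    (∃ (f1 : Module.Dual A (V ⊗[A] M) →ₗ[A] (V →ₗ[A] A) ⊗[A] (Module.Dual A M))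
      (f2 : Module.Dual A T →ₗ[A] T3),
      Function.Bijective f1 ∧ Function.Bijective f2 ∧
      (∀ g : Module.Dual A (V ⊗[A] M), f2 (piT.dualMap g) = m1 (f1 g)) ∧
      (∀ h : Module.Dual A T, m2 (f2 h) = unitT.dualMap h)) := by
  classical
  -- ### A finite dual basis for `V`
  obtain ⟨n, vB, hspan⟩ := Module.Finite.exists_fin (R := A) (M := V)
  have hπsurj : Function.Surjective (Fintype.linearCombination A vB) := by
    rw [← LinearMap.range_eq_top, ← top_le_iff, ← hspan, Submodule.span_le]
    rintro _ ⟨i, rfl⟩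
    exact ⟨Pi.single i 1, by simp⟩
  obtain ⟨σ, hσ⟩ := Module.projective_lifting_property
    (Fintype.linearCombination A vB) LinearMap.id hπsurj
  set θB : Fin n → (V →ₗ[A] A) := fun i => (LinearMap.proj i).comp σ with hθBdef
  have hdb : ∀ v : V, ∑ i, θB i v • vB i = v := by
    intro v
    have h := congrArg (fun f : V →ₗ[A] V => f v) hσ
    simpa [Fintype.linearCombination_apply, θB] using h
  have hdual : ∀ θ : V →ₗ[A] A, ∑ i, θ (vB i) • θB i = θ := by
    intro θ
    ext v
    simp only [LinearMap.coe_sum, Finset.sum_apply, LinearMap.smul_apply, smul_eq_mul]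
    calc ∑ i, θ (vB i) * θB i v = θ (∑ i, θB i v • vB i) := by
          rw [map_sum]
          exact Finset.sum_congr rfl fun i _ => by rw [map_smul, smul_eq_mul, mul_comm]
    _ = θ v := by rw [hdb]
  have hrho : ∀ (v : V) (a : A), ρ v a = ∑ i, θB i v * ρ (vB i) a := by
    intro v a
    have h : rhoStar ρ a v = rhoStar ρ a (∑ i, θB i v • vB i) := by rw [hdb]
    rw [map_sum] at h
    simpa [rhoStar, smul_eq_mul] using h
  have hη : ∀ a : A, ∑ i, ρ (vB i) a • θB i = rhoStar ρ a := by
    intro a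
    ext v
    simp only [LinearMap.coe_sum, Finset.sum_apply, LinearMap.smul_apply, smul_eq_mul]
    have : rhoStar ρ a v = ρ v a := rfl
    rw [this, hrho v a]
    exact Finset.sum_congr rfl fun i _ => mul_comm _ _
  -- ### basic lemmas about `tt` and `tt3`
  have tt3_zero : ∀ x, tt3 x (0 : Module.Dual A M) = 0 := by
    intro x
    have h := tt3_addr x 0 0
    rw [add_zero] at h
    exact (left_eq_add.mp h)
  have tt_a0 : ∀ (a : A) (m : M), tt (a, 0) m = unitT (a • m) := by
    intro a m
    have h := tt_bal 1 a 0 m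
    simp only [one_mul, map_zero, Derivation.zero_apply, add_zero, smul_zero] at h
    rw [hunit]
    exact h
  have tt_smul0 : ∀ (a : A) (v : V) (m : M),
      tt (0, v) (a • m) = a • tt (0, v) m + unitT ((ρ v a) • m) := by
    intro a v m
    have h := tt_bal 0 a v m
    rw [zero_mul, zero_add] at h
    rw [← h]
    have hsplit : ((ρ v a, a • v) : A × V) = (ρ v a, 0) + (0, a • v) := by
      simp [Prod.ext_iff]
    have hmod := tt_mod a 0 v m
    rw [mul_zero] at hmod
    rw [hsplit, tt_addl, tt_a0, ← hmod, add_comm]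
  -- extensionality from the universal properties
  have tt_ext : ∀ (N : Type u) [AddCommGroup N] (F₁ F₂ : T →+ N),
      (∀ s m, F₁ (tt s m) = F₂ (tt s m)) → F₁ = F₂ := by
    intro N _ F₁ F₂ h
    obtain ⟨F, hF, huniq⟩ := tt_univ N (fun s m => F₂ (tt s m))
      (fun s s' m => by simp only [tt_addl, map_add])
      (fun s m m' => by simp only [tt_addr, map_add])
      (fun b a v m => by simp only [tt_bal])
    rw [huniq F₁ h, huniq F₂ (fun s m => rfl)]
  have tt3_ext : ∀ (N : Type u) [AddCommGroup N] (F₁ F₂ : T3 →+ N),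
      (∀ x δ, F₁ (tt3 x δ) = F₂ (tt3 x δ)) → F₁ = F₂ := by
    intro N _ F₁ F₂ h
    obtain ⟨F, hF, huniq⟩ := tt3_univ N (fun x δ => F₂ (tt3 x δ))
      (fun x x' δ => by simp only [tt3_addl, map_add])
      (fun x δ δ' => by simp only [tt3_addr, map_add])
      (fun a θ b δ => by simp only [tt3_bal])
    rw [huniq F₁ h, huniq F₂ (fun x δ => rfl)]
  have dual_ext : ∀ (g₁ g₂ : Module.Dual A T),
      (∀ s m, g₁ (tt s m) = g₂ (tt s m)) → g₁ = g₂ := by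
    intro g₁ g₂ h
    have h2 := tt_ext A g₁.toAddMonoidHom g₂.toAddMonoidHom h
    exact LinearMap.ext fun t => DFunLike.congr_fun h2 t
  -- bundled additivity for `tt3`
  have tt3_sub : ∀ x (d d' : Module.Dual A M), tt3 x (d - d') = tt3 x d - tt3 x d' :=
    fun x d d' => map_sub (AddMonoidHom.mk' (tt3 x) (tt3_addr x)) d d'
  have tt3_sumx : ∀ (δ : Module.Dual A M) (f : Fin n → (V →ₗ[A] A) × A),
      tt3 (∑ i, f i) δ = ∑ i, tt3 (f i) δ :=
    fun δ f => map_sum (AddMonoidHom.mk' (fun x => tt3 x δ) (fun x x' => tt3_addl x x' δ))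
      f Finset.univ
  have prod_sum : ∀ (f : Fin n → (V →ₗ[A] A)),
      (∑ i, ((f i, (0 : A)) : (V →ₗ[A] A) × A)) = (∑ i, f i, (0 : A)) := by
    intro f
    refine Prod.ext ?_ ?_
    · rw [Prod.fst_sum]
    · rw [Prod.snd_sum]; simp
  have htt0sum : ∀ (v : V) (m : M), tt (0, v) m = ∑ i, θB i v • tt (0, vB i) m := by
    intro v m
    have hsm : ∀ (c : A) (w : V), c • tt (0, w) m = tt (0, c • w) m := by
      intro c w
      have h := tt_mod c 0 w m
      rwa [mul_zero] at h
    let B : V →+ T := AddMonoidHom.mk' (fun w => tt (0, w) m) (fun w w' => by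
      have h := tt_addl (0, w) (0, w') m
      rw [Prod.mk_add_mk, zero_add] at h
      exact h)
    calc tt (0, v) m = B v := rfl
    _ = B (∑ i, θB i v • vB i) := by rw [hdb]
    _ = ∑ i, B (θB i v • vB i) := map_sum B _ _
    _ = ∑ i, θB i v • tt (0, vB i) m := Finset.sum_congr rfl fun i _ => (hsm _ _).symm
  -- ### construction of linear functionals on `T`
  have mkDual : ∀ (f : (A × V) → M → A),
      (∀ s s' m, f (s + s') m = f s m + f s' m) →
      (∀ s m m', f s (m + m') = f s m + f s m') →
      (∀ b a v m, f (b * a + ρ v a, a • v) m = f (b, v) (a • m)) →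
      (∀ a b v m, f (a * b, a • v) m = a * f (b, v) m) →
      ∃ g : Module.Dual A T, ∀ s m, g (tt s m) = f s m := by
    intro f h1 h2 h3 h4
    obtain ⟨G, hG, -⟩ := tt_univ A f h1 h2 h3
    have hsm : ∀ (a : A) (t : T), G (a • t) = a * G t := by
      intro a t
      have hEq := tt_ext A
        (AddMonoidHom.mk' (fun t => G (a • t)) (fun x y => by simp only [smul_add, map_add]))
        (AddMonoidHom.mk' (fun t => a * G t) (fun x y => by simp only [map_add, mul_add]))
        (fun s m => by
          obtain ⟨b, v⟩ := s
          show G (a • tt (b, v) m) = a * G (tt (b, v) m)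
          rw [tt_mod, hG, hG, h4])
      exact DFunLike.congr_fun hEq t
    exact ⟨{ toFun := G, map_add' := G.map_add,
             map_smul' := fun a t => by simp only [RingHom.id_apply, smul_eq_mul]; exact hsm a t },
           hG⟩
  -- the connection-type functional `E δ`
  have hEex : ∀ δ : Module.Dual A M, ∃ g : Module.Dual A T,
      ∀ s m, g (tt s m) = s.1 * δ m + ρ s.2 (δ m) := by
    intro δ
    apply mkDual
    · intro s s' m
      simp only [Prod.fst_add, Prod.snd_add, map_add, Derivation.add_apply]
      ring
    · intro s m m'
      simp only [map_add]
      ring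
    · intro b a v m
      simp only [map_smul, smul_eq_mul, Derivation.smul_apply]
      rw [Derivation.leibniz]
      simp only [smul_eq_mul]
      ring
    · intro a b v m
      simp only [map_smul, smul_eq_mul, Derivation.smul_apply]
      ring
  set E : Module.Dual A M → Module.Dual A T := fun δ => (hEex δ).choose with hEdef
  have hE : ∀ δ s m, E δ (tt s m) = s.1 * δ m + ρ s.2 (δ m) := fun δ => (hEex δ).choose_spec
  -- components of a functional on `T`
  set dinf : Module.Dual A T → Module.Dual A M := fun g => g ∘ₗ unitT with hdinfdef
  have hdinf : ∀ g m, dinf g m = g (unitT m) := fun g m => rfl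
  set di : Module.Dual A T → Fin n → Module.Dual A M := fun g i =>
    { toFun := fun m => g (tt (0, vB i) m) - ρ (vB i) (g (unitT m))
      map_add' := fun m m' => by
        show g (tt (0, vB i) (m + m')) - ρ (vB i) (g (unitT (m + m')))
            = (g (tt (0, vB i) m) - ρ (vB i) (g (unitT m)))
              + (g (tt (0, vB i) m') - ρ (vB i) (g (unitT m')))
        rw [tt_addr, map_add, map_add, map_add, map_add]
        ring
      map_smul' := fun a m => by
        show g (tt (0, vB i) (a • m)) - ρ (vB i) (g (unitT (a • m)))
            = (RingHom.id A) a • (g (tt (0, vB i) m) - ρ (vB i) (g (unitT m)))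
        simp only [RingHom.id_apply, smul_eq_mul]
        simp only [tt_smul0, map_add, map_smul, smul_eq_mul, Derivation.leibniz]
        ring } with hdidef
  have hdi : ∀ g i m, di g i m = g (tt (0, vB i) m) - ρ (vB i) (g (unitT m)) :=
    fun g i m => rfl
  -- ### the map `f2 : Dual T → T3`
  have hdinf_add : ∀ g g', dinf (g + g') = dinf g + dinf g' := by
    intro g g'; ext m; simp only [hdinf, LinearMap.add_apply]
  have hdi_add : ∀ g g' i, di (g + g') i = di g i + di g' i := by
    intro g g' i; ext m
    simp only [hdi, LinearMap.add_apply, map_add]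
    ring
  set f2 : Module.Dual A T →ₗ[A] T3 :=
    { toFun := fun g => tt3 (0, 1) (dinf g) - ∑ i, tt3 (θB i, 0) (di g i)
      map_add' := fun g g' => by
        show tt3 (0, 1) (dinf (g + g')) - ∑ i, tt3 (θB i, 0) (di (g + g') i)
            = (tt3 (0, 1) (dinf g) - ∑ i, tt3 (θB i, 0) (di g i))
              + (tt3 (0, 1) (dinf g') - ∑ i, tt3 (θB i, 0) (di g' i))
        rw [hdinf_add, tt3_addr]
        have h : ∀ i ∈ Finset.univ, tt3 (θB i, 0) (di (g + g') i)
            = tt3 (θB i, 0) (di g i) + tt3 (θB i, 0) (di g' i) := fun i _ => by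
          rw [hdi_add, tt3_addr]
        rw [Finset.sum_congr rfl h, Finset.sum_add_distrib]
        abel
      map_smul' := fun a g => by
        show tt3 (0, 1) (dinf (a • g)) - ∑ i, tt3 (θB i, 0) (di (a • g) i)
            = (RingHom.id A) a • (tt3 (0, 1) (dinf g) - ∑ i, tt3 (θB i, 0) (di g i))
        simp only [RingHom.id_apply]
        have hinf : dinf (a • g) = a • dinf g := by
          ext m; simp [hdinf, smul_eq_mul]
        have hdia : ∀ i, di (a • g) i = a • di g i - ρ (vB i) a • dinf g := by
          intro i; ext m
          simp only [hdi, LinearMap.smul_apply, LinearMap.sub_apply, smul_eq_mul, hdinf]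
          rw [Derivation.leibniz]
          simp only [smul_eq_mul]
          ring
        rw [hinf]
        have e1 : tt3 ((0 : V →ₗ[A] A), (1 : A)) (a • dinf g) = tt3 (0, a) (dinf g) := by
          have h := tt3_bal a 0 1 (dinf g)
          rw [smul_zero, one_mul] at h
          exact h.symm
        have e2 : ∀ i ∈ Finset.univ, tt3 (θB i, 0) (di (a • g) i)
            = tt3 (a • θB i, 0) (di g i) - tt3 (ρ (vB i) a • θB i, 0) (dinf g) := by
          intro i _
          rw [hdia i, tt3_sub]
          congr 1
          · have h := tt3_bal a (θB i) 0 (di g i)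
            rw [zero_mul] at h
            exact h.symm
          · have h := tt3_bal (ρ (vB i) a) (θB i) 0 (dinf g)
            rw [zero_mul] at h
            exact h.symm
        rw [e1, Finset.sum_congr rfl e2, Finset.sum_sub_distrib]
        have e3 : (∑ i, tt3 (ρ (vB i) a • θB i, 0) (dinf g))
            = tt3 (rhoStar ρ a, 0) (dinf g) := by
          rw [← tt3_sumx (dinf g) (fun i => (ρ (vB i) a • θB i, 0)), prod_sum, hη]
        rw [e3]
        -- right hand side
        have r1 : a • tt3 ((0 : V →ₗ[A] A), (1 : A)) (dinf g)
            = tt3 (rhoStar ρ a, 0) (dinf g) + tt3 (0, a) (dinf g) := by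
          rw [tt3_mod]
          have : ((a • (0 : V →ₗ[A] A) + (1 : A) • rhoStar ρ a, a * 1) : (V →ₗ[A] A) × A)
              = ((rhoStar ρ a, 0) : (V →ₗ[A] A) × A) + ((0, a) : (V →ₗ[A] A) × A) := by
            simp [Prod.ext_iff]
          rw [this, tt3_addl]
        have r2 : ∀ i ∈ Finset.univ, a • tt3 (θB i, 0) (di g i)
            = tt3 (a • θB i, 0) (di g i) := by
          intro i _
          rw [tt3_mod]
          congr 1
          simp [Prod.ext_iff]
        rw [smul_sub, Finset.smul_sum, r1, Finset.sum_congr rfl r2]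
        abel }
    with hf2setdef
  have hf2def : ∀ g, f2 g = tt3 (0, 1) (dinf g) - ∑ i, tt3 (θB i, 0) (di g i) :=
    fun g => rfl
  -- ### the map `ψ2` and `f1`
  set ψ2 : ((V →ₗ[A] A) ⊗[A] Module.Dual A M) →ₗ[A] Module.Dual A T :=
    piT.dualMap ∘ₗ TensorProduct.dualDistrib A V M with hψ2def
  set f10 : Module.Dual A (V ⊗[A] M) →ₗ[A] ((V →ₗ[A] A) ⊗[A] Module.Dual A M) :=
    { toFun := fun h => ∑ i, θB i ⊗ₜ[A] (h ∘ₗ TensorProduct.mk A V M (vB i))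
      map_add' := fun h h' => by
        simp only [LinearMap.add_comp, TensorProduct.tmul_add]
        rw [Finset.sum_add_distrib]
      map_smul' := fun a h => by
        simp only [RingHom.id_apply, LinearMap.smul_comp, TensorProduct.tmul_smul]
        rw [Finset.smul_sum] }
    with hf10setdef
  have hf10def : ∀ h, f10 h = ∑ i, θB i ⊗ₜ[A] (h ∘ₗ TensorProduct.mk A V M (vB i)) :=
    fun h => rfl
  set f1 : Module.Dual A (V ⊗[A] M) →ₗ[A] ((V →ₗ[A] A) ⊗[A] Module.Dual A M) :=
    { toFun := fun h => -(f10 h)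
      map_add' := fun h h' => by
        show -(f10 (h + h')) = -(f10 h) + -(f10 h')
        rw [map_add]
        exact neg_add (f10 h) (f10 h')
      map_smul' := fun a h => by
        show -(f10 (a • h)) = (RingHom.id A) a • -(f10 h)
        rw [map_smul, RingHom.id_apply]
        exact (smul_neg a (f10 h)).symm }
    with hf1def
  have hf1app : ∀ h, f1 h = -(f10 h) := fun h => rfl
  -- ### the splitting `Fm` of `T3`
  obtain ⟨Fm, hFm, -⟩ := tt3_univ
    ((((V →ₗ[A] A) ⊗[A] Module.Dual A M) × Module.Dual A M))
    (fun x δ => (x.1 ⊗ₜ[A] δ, x.2 • δ))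
    (fun x x' δ => by
      simp [Prod.ext_iff, Prod.fst_add, Prod.snd_add, TensorProduct.add_tmul, add_smul])
    (fun x δ δ' => by
      simp [Prod.ext_iff, TensorProduct.tmul_add, smul_add])
    (fun a θ b δ => by
      simp [Prod.ext_iff, TensorProduct.smul_tmul, mul_smul])
  -- `K = id` on `T3`
  have hK : ∀ y : T3, m1 (Fm y).1 + tt3 (0, 1) (Fm y).2 = y := by
    have hEq := tt3_ext T3
      (AddMonoidHom.mk' (fun y => m1 (Fm y).1 + tt3 ((0 : V →ₗ[A] A), (1 : A)) (Fm y).2)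
        (fun y y' => by
          show m1 (Fm (y + y')).1 + tt3 (0, 1) (Fm (y + y')).2 = _
          rw [map_add, Prod.fst_add, Prod.snd_add, map_add, tt3_addr]
          abel))
      (AddMonoidHom.id T3)
      (fun x δ => by
        obtain ⟨θ, b⟩ := x
        show m1 (Fm (tt3 (θ, b) δ)).1 + tt3 (0, 1) (Fm (tt3 (θ, b) δ)).2 = tt3 (θ, b) δ
        rw [hFm, hm1]
        have e : tt3 ((0 : V →ₗ[A] A), b) δ = tt3 (0, 1) (b • δ) := by
          have h := tt3_bal b 0 1 δ
          rwa [smul_zero, one_mul] at h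
        rw [← e, ← tt3_addl]
        congr 1
        simp [Prod.ext_iff])
    intro y
    exact DFunLike.congr_fun hEq y
  have hm2F : ∀ y : T3, m2 y = (Fm y).2 := by
    have hEq := tt3_ext (Module.Dual A M) m2.toAddMonoidHom
      ((AddMonoidHom.snd _ _).comp Fm)
      (fun x δ => by
        obtain ⟨θ, b⟩ := x
        show m2 (tt3 (θ, b) δ) = (Fm (tt3 (θ, b) δ)).2
        rw [hm2, hFm])
    intro y
    exact DFunLike.congr_fun hEq y
  -- ### exactness of the second sequence
  have hm1m2 : ∀ p, m2 (m1 p) = 0 := by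
    intro p
    induction p using TensorProduct.induction_on with
    | zero => simp
    | tmul θ δ => rw [hm1, hm2, zero_smul]
    | add p q hp hq => rw [map_add, map_add, hp, hq, add_zero]
  have hFm1 : ∀ p, (Fm (m1 p)).1 = p := by
    intro p
    induction p using TensorProduct.induction_on with
    | zero => simp
    | tmul θ δ => rw [hm1, hFm]
    | add p q hp hq => rw [map_add, map_add, Prod.fst_add, hp, hq]
  have hm1inj : Function.Injective m1 := by
    intro p q h
    rw [← hFm1 p, ← hFm1 q, h]
  have hmid2 : ∀ y : T3, m2 y = 0 ↔ y ∈ LinearMap.range m1 := by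
    intro y
    constructor
    · intro h0
      have h2 : (Fm y).2 = 0 := by rw [← hm2F, h0]
      refine ⟨(Fm y).1, ?_⟩
      have := hK y
      rwa [h2, tt3_zero, add_zero] at this
    · rintro ⟨p, rfl⟩
      exact hm1m2 p
  have hm2surj : Function.Surjective m2 := by
    intro δ
    exact ⟨tt3 (0, 1) δ, by rw [hm2, one_smul]⟩
  -- ### computations for `f2`
  have hinv1 : ∀ g : Module.Dual A T, ψ2 (∑ i, θB i ⊗ₜ[A] di g i) + E (dinf g) = g := by
    intro g
    apply dual_ext
    rintro ⟨a, v⟩ m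
    rw [LinearMap.add_apply]
    have hψ : ψ2 (∑ i, θB i ⊗ₜ[A] di g i) (tt (a, v) m)
        = ∑ i, θB i v * di g i m := by
      rw [hψ2def]
      simp only [LinearMap.comp_apply, LinearMap.dualMap_apply, hpi, map_sum,
        LinearMap.coe_sum, Finset.sum_apply, TensorProduct.dualDistrib_apply]
    rw [hψ, hE]
    have hg0 : ∑ i, θB i v * g (tt (0, vB i) m) = g (tt (0, v) m) := by
      rw [htt0sum v m, map_sum]
      exact Finset.sum_congr rfl fun i _ => by rw [map_smul, smul_eq_mul]
    have hgav : g (tt (a, v) m) = a * g (unitT m) + g (tt (0, v) m) := by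
      have h1 : ((a, v) : A × V) = (a, 0) + (0, v) := by simp [Prod.ext_iff]
      rw [h1, tt_addl, tt_a0, map_add, map_smul, map_smul, smul_eq_mul]
    rw [hgav, ← hg0]
    have hr := hrho v (g (unitT m))
    simp only [hdi, hdinf, mul_sub, Finset.sum_sub_distrib]
    rw [← hr]
    ring
  have hf2E : ∀ δ : Module.Dual A M, f2 (E δ) = tt3 (0, 1) δ := by
    intro δ
    have h1 : dinf (E δ) = δ := by
      ext m
      rw [hdinf, hunit, hE]
      simp
    have h2 : ∀ i ∈ Finset.univ, tt3 (θB i, 0) (di (E δ) i)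
        = tt3 (θB i, 0) (0 : Module.Dual A M) := by
      intro i _
      congr 1
      ext m
      rw [hdi, hunit, hE, hE]
      simp
    rw [hf2def, h1, Finset.sum_congr rfl h2]
    simp only [tt3_zero, Finset.sum_const_zero, sub_zero]
  have hψ2tmul : ∀ (θ : V →ₗ[A] A) (δ : Module.Dual A M),
      f2 (ψ2 (θ ⊗ₜ[A] δ)) = -tt3 (θ, 0) δ := by
    intro θ δ
    have hgt : ∀ (a : A) (v : V) (m : M),
        ψ2 (θ ⊗ₜ[A] δ) (tt (a, v) m) = θ v * δ m := by
      intro a v m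
      rw [hψ2def]
      simp only [LinearMap.comp_apply, LinearMap.dualMap_apply, hpi,
        TensorProduct.dualDistrib_apply]
    have h1 : dinf (ψ2 (θ ⊗ₜ[A] δ)) = 0 := by
      ext m
      rw [hdinf, hunit, hgt]
      simp
    have h2 : ∀ i ∈ Finset.univ, tt3 (θB i, 0) (di (ψ2 (θ ⊗ₜ[A] δ)) i)
        = tt3 (θ (vB i) • θB i, 0) δ := by
      intro i _
      have e : di (ψ2 (θ ⊗ₜ[A] δ)) i = θ (vB i) • δ := by
        ext m
        rw [hdi, hunit, hgt, hgt]
        simp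
      rw [e]
      have h := tt3_bal (θ (vB i)) (θB i) 0 δ
      rw [zero_mul] at h
      exact h.symm
    rw [hf2def, h1, tt3_zero, zero_sub, Finset.sum_congr rfl h2,
      ← tt3_sumx δ (fun i => (θ (vB i) • θB i, 0)), prod_sum, hdual]
  have hψ2all : ∀ p, f2 (ψ2 p) = -m1 p := by
    intro p
    induction p using TensorProduct.induction_on with
    | zero => simp
    | tmul θ δ => rw [hψ2tmul, hm1]
    | add p q hp hq => rw [map_add, map_add, map_add, hp, hq, neg_add]
  have hFf2 : ∀ g, Fm (f2 g) = (-(∑ i, θB i ⊗ₜ[A] di g i), dinf g) := by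
    intro g
    rw [hf2def, map_sub, map_sum]
    have e1 : Fm (tt3 ((0 : V →ₗ[A] A), (1 : A)) (dinf g))
        = ((0 : (V →ₗ[A] A) ⊗[A] Module.Dual A M), dinf g) := by
      rw [hFm]
      simp
    have e2 : ∀ i ∈ Finset.univ, Fm (tt3 (θB i, 0) (di g i))
        = ((θB i ⊗ₜ[A] di g i, (0 : Module.Dual A M)) :
            ((V →ₗ[A] A) ⊗[A] Module.Dual A M) × Module.Dual A M) := by
      intro i _
      rw [hFm]
      simp
    rw [e1, Finset.sum_congr rfl e2]
    have hsum : (∑ i, ((θB i ⊗ₜ[A] di g i, (0 : Module.Dual A M)) :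
        ((V →ₗ[A] A) ⊗[A] Module.Dual A M) × Module.Dual A M))
        = (∑ i, θB i ⊗ₜ[A] di g i, (0 : Module.Dual A M)) := by
      refine Prod.ext ?_ ?_
      · rw [Prod.fst_sum]
      · rw [Prod.snd_sum]
        exact Finset.sum_const_zero
    rw [hsum]
    refine Prod.ext ?_ ?_
    · exact zero_sub (∑ i, θB i ⊗ₜ[A] di g i)
    · exact sub_zero _
  have hf2bij : Function.Bijective f2 := by
    constructor
    · intro g g' e
      have hc := congrArg Fm e
      rw [hFf2, hFf2, Prod.mk.injEq] at hc
      obtain ⟨hc1, hc2⟩ := hc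
      have hc1' : (∑ i, θB i ⊗ₜ[A] di g i) = ∑ i, θB i ⊗ₜ[A] di g' i := neg_inj.mp hc1
      rw [← hinv1 g, ← hinv1 g', hc1', hc2]
    · intro y
      refine ⟨E ((Fm y).2) - ψ2 ((Fm y).1), ?_⟩
      rw [map_sub, hf2E, hψ2all, sub_neg_eq_add, add_comm]
      exact hK y
  -- ### bijectivity of `f1`
  have hcomp1 : ∀ h : Module.Dual A (V ⊗[A] M),
      TensorProduct.dualDistrib A V M (f10 h) = h := by
    intro h
    apply LinearMap.ext
    intro p
    induction p using TensorProduct.induction_on with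
    | zero => simp
    | tmul v m =>
      rw [hf10def, map_sum]
      simp only [LinearMap.coe_sum, Finset.sum_apply, TensorProduct.dualDistrib_apply,
        TensorProduct.mk_apply, LinearMap.comp_apply]
      calc ∑ i, θB i v * h (vB i ⊗ₜ[A] m)
          = h ((∑ i, θB i v • vB i) ⊗ₜ[A] m) := by
            rw [TensorProduct.sum_tmul, map_sum]
            exact Finset.sum_congr rfl fun i _ => by
              rw [← TensorProduct.smul_tmul', map_smul, smul_eq_mul]
      _ = h (v ⊗ₜ[A] m) := by rw [hdb]
    | add p q hp hq => rw [map_add, map_add, hp, hq]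
  have hcomp2 : ∀ p, f10 (TensorProduct.dualDistrib A V M p) = p := by
    intro p
    induction p using TensorProduct.induction_on with
    | zero => simp
    | tmul θ δ =>
      rw [hf10def]
      have e : ∀ i ∈ Finset.univ, θB i ⊗ₜ[A]
          ((TensorProduct.dualDistrib A V M (θ ⊗ₜ[A] δ)) ∘ₗ TensorProduct.mk A V M (vB i))
          = (θ (vB i) • θB i) ⊗ₜ[A] δ := by
        intro i _
        have e2 : (TensorProduct.dualDistrib A V M (θ ⊗ₜ[A] δ)) ∘ₗ
            TensorProduct.mk A V M (vB i) = θ (vB i) • δ := by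
          ext m
          simp [TensorProduct.dualDistrib_apply, mul_assoc]
        rw [e2, ← TensorProduct.smul_tmul]
      rw [Finset.sum_congr rfl e, ← TensorProduct.sum_tmul, hdual]
    | add p q hp hq => rw [map_add, map_add, hp, hq]
  have hf1bij : Function.Bijective f1 := by
    constructor
    · intro h h' e
      have e' : f10 h = f10 h' := by
        rw [hf1app, hf1app] at e
        exact neg_inj.mp e
      rw [← hcomp1 h, ← hcomp1 h', e']
    · intro p
      refine ⟨-(TensorProduct.dualDistrib A V M p), ?_⟩
      rw [hf1app]
      have hmn : f10 (-(TensorProduct.dualDistrib A V M p))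
          = -(f10 (TensorProduct.dualDistrib A V M p)) := map_neg f10 _
      rw [hmn]
      exact (neg_neg _).trans (hcomp2 p)
  -- ### the commuting squares
  have hsq2 : ∀ g : Module.Dual A T, m2 (f2 g) = unitT.dualMap g := by
    intro g
    rw [hf2def, map_sub, map_sum]
    have e1 : m2 (tt3 ((0 : V →ₗ[A] A), (1 : A)) (dinf g)) = dinf g := by
      rw [hm2, one_smul]
    have e2 : ∀ i ∈ Finset.univ, m2 (tt3 (θB i, 0) (di g i)) = 0 := fun i _ => by
      rw [hm2, zero_smul]
    rw [e1, Finset.sum_congr rfl e2, Finset.sum_const_zero, sub_zero]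
    ext m
    rw [hdinf, LinearMap.dualMap_apply]
  have hsq1 : ∀ h : Module.Dual A (V ⊗[A] M),
      f2 (piT.dualMap h) = m1 (f1 h) := by
    intro h
    have h1 : dinf (piT.dualMap h) = 0 := by
      ext m
      rw [hdinf, LinearMap.dualMap_apply, hunit, hpi]
      simp
    have h2 : ∀ i ∈ Finset.univ, tt3 (θB i, 0) (di (piT.dualMap h) i)
        = tt3 (θB i, 0) (h ∘ₗ TensorProduct.mk A V M (vB i)) := by
      intro i _
      congr 1
      ext m
      have hz : piT.dualMap h (unitT m) = 0 := by
        rw [LinearMap.dualMap_apply, hunit, hpi]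
        simp
      rw [hdi, hz, map_zero, sub_zero, LinearMap.dualMap_apply, hpi]
      simp
    rw [hf2def, h1, tt3_zero, zero_sub, Finset.sum_congr rfl h2]
    rw [hf1app]
    have hmn : m1 (-(f10 h)) = -(m1 (f10 h)) := map_neg m1 _
    rw [hmn, neg_inj, hf10def, map_sum]
    exact Finset.sum_congr rfl fun i _ => (hm1 _ _).symm
  -- ### exactness of the dualized Atiyah sequence (from the isomorphism)
  have part1a : Function.Injective piT.dualMap := by
    intro h h' e
    have : m1 (f1 h) = m1 (f1 h') := by
      rw [← hsq1, ← hsq1, e]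
    exact hf1bij.1 (hm1inj this)
  have part1b : ∀ g : Module.Dual A T,
      unitT.dualMap g = 0 ↔ g ∈ LinearMap.range piT.dualMap := by
    intro g
    constructor
    · intro h0
      have hz : m2 (f2 g) = 0 := by rw [hsq2]; exact h0
      obtain ⟨p, hp⟩ := (hmid2 (f2 g)).1 hz
      obtain ⟨hh, rfl⟩ := hf1bij.2 p
      have : f2 (piT.dualMap hh) = f2 g := by rw [hsq1]; exact hp
      exact ⟨hh, hf2bij.1 this⟩
    · rintro ⟨hh, rfl⟩
      rw [← hsq2, hsq1]
      exact hm1m2 (f1 hh)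
  have part1c : Function.Surjective unitT.dualMap := by
    intro δ
    obtain ⟨y, hy⟩ := hm2surj δ
    obtain ⟨g, rfl⟩ := hf2bij.2 y
    exact ⟨g, by rw [← hsq2]; exact hy⟩
  exact ⟨⟨part1a, part1b, part1c⟩, ⟨hm1inj, hmid2, hm2surj⟩,
    f1, f2, hf1bij, hf2bij, hsq1, hsq2⟩
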